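/- If A ∈ M_n ⊗ M_m is a matrix such that A*B is a positive semidefinite Hermitian matrix for every positive semidefinite Hermitian matrix B ∈ M_m ⊗ M_l (for all l ≥ 1), then A itself is a positive semidefinite Hermitian matrix. -/

import Mathlib

open Matrix ComplexOrder

/-- The star product on matrices. -/
noncomputable def starMat {n m l : ℕ} (A : Matrix (Fin n × Fin m) (Fin n × Fin m) ℂ)
    (B : Matrix (Fin m × Fin l) (Fin m × Fin l) ℂ) :
    Matrix (Fin n × Fin l) (Fin n × Fin l) ℂ :=
  Matrix.of fun p q => ∑ a : Fin m, ∑ b : Fin m, A (p.1, a) (q.1, b) * B (a, p.2) (b, q.2)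

theorem stmt6 {n m : ℕ} (A : Matrix (Fin n × Fin m) (Fin n × Fin m) ℂ)
    (h : ∀ l : ℕ, 1 ≤ l → ∀ B : Matrix (Fin m × Fin l) (Fin m × Fin l) ℂ,
      B.PosSemidef → (starMat A B).PosSemidef) :
    A.PosSemidef := by
  rcases Nat.eq_zero_or_pos m with hm | hm
  · subst hm
    constructor
    · ext ⟨i, j⟩ ⟨k, l⟩
      exact j.elim0
    · intro x
      have hx : x = 0 := by
        ext ⟨i, j⟩
        exact j.elim0
      simp [hx]
  · set M : Matrix (Fin 1) (Fin m × Fin m) ℂ :=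
      Matrix.of fun _ p => if p.1 = p.2 then (1:ℂ) else 0 with hM
    set B : Matrix (Fin m × Fin m) (Fin m × Fin m) ℂ := Mᴴ * M with hB
    have hBapply : ∀ p q, B p q =
        (if p.1 = p.2 then (1:ℂ) else 0) * (if q.1 = q.2 then 1 else 0) := by
      intro p q
      simp [hB, hM, Matrix.mul_apply, conjTranspose_apply, apply_ite (starRingEnd ℂ)]
    have hBpsd : B.PosSemidef := posSemidef_conjTranspose_mul_self M
    have heq : starMat A B = A := by
      ext ⟨p1, p2⟩ ⟨q1, q2⟩
      simp only [starMat, Matrix.of_apply, hBapply, mul_ite, ite_mul, mul_one, mul_zero,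
        one_mul, zero_mul]
      rw [Finset.sum_comm]
      simp [Finset.sum_ite_eq' Finset.univ]
    have := h m hm B hBpsd
    rwa [heq] at this
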